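/- arXiv:2109.15292 — 2 statements merged into one kernel-verified Lean document; each statement's English description precedes it below -/
import Mathlib

section
/- Let f = (1/n)∑_{i=1}^n f_i where each f_i : ℝ^d → ℝ is convex and L-smooth, with ∇f_i(x) supported on T_i for all x (meaning P_i ∇f_i(x) = ∇f_i(x)). Let D, D_i be as in the sparse estimator construction, and for fixed y, x̃ ∈ ℝ^d define G_i = ∇f_i(y) - ∇f_i(x̃) + D_i ∇f(x̃). Then (1/n)∑_{i=1}^n ‖G_i - ∇f(y)‖² ≤ 2L( f(x̃) - f(y) - ⟨∇f(y), x̃ - y⟩ ) - ‖∇f(y)‖² + 2⟨∇f(y), D ∇f(x̃)⟩ - ⟨∇f(x̃), D ∇f(x̃)⟩. -/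
open scoped RealInnerProductSpace BigOperators

section Aux

variable {E : Type*} [NormedAddCommGroup E] [InnerProductSpace ℝ E] [CompleteSpace E]

private lemma hasDerivAt_comp_line (f : E → ℝ) (g : E → E)
    (hg : ∀ x, HasGradientAt f (g x) x) (a v : E) (t : ℝ) :
    HasDerivAt (fun s : ℝ => f (a + s • v)) ⟪g (a + t • v), v⟫ t := by
  have hc : HasDerivAt (fun s : ℝ => a + s • v) v t := by
    simpa using ((hasDerivAt_id t).smul_const v).const_add a
  have h2 := (hg (a + t • v)).hasFDerivAt.comp_hasDerivAt t hc
  exact (by simpa [InnerProductSpace.toDual_apply_apply] using h2 :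
    HasDerivAt (f ∘ fun s : ℝ => a + s • v) ⟪g (a + t • v), v⟫ t)

private lemma convex_first_order (f : E → ℝ) (g : E → E)
    (hg : ∀ x, HasGradientAt f (g x) x) (hconv : ConvexOn ℝ Set.univ f) (y z : E) :
    f y + ⟪g y, z - y⟫ ≤ f z := by
  have hψ : ConvexOn ℝ Set.univ (fun t : ℝ => f (y + t • (z - y))) := by
    have h := hconv.comp_affineMap (AffineMap.lineMap y z)
    have he : ∀ t : ℝ, (f ∘ (AffineMap.lineMap y z)) t = f (y + t • (z - y)) := by
      intro t
      simp [AffineMap.lineMap_apply, add_comm]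
    have : (AffineMap.lineMap y z : ℝ → E) ⁻¹' Set.univ = Set.univ := by simp
    rw [this] at h
    exact h.congr (fun t _ => (he t))
  have hd : HasDerivAt (fun t : ℝ => f (y + t • (z - y))) ⟪g y, z - y⟫ 0 := by
    have := hasDerivAt_comp_line f g hg y (z - y) 0
    simpa using this
  have hs := hψ.le_slope_of_hasDerivAt (Set.mem_univ (0 : ℝ)) (Set.mem_univ (1 : ℝ))
    one_pos hd
  rw [slope_def_field] at hs
  simp at hs
  linarith

private lemma descent_lemma (f : E → ℝ) (g : E → E)
    (hg : ∀ x, HasGradientAt f (g x) x) (L : ℝ) (hL : 0 < L)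
    (hlip : LipschitzWith L.toNNReal g) (a b : E) :
    f b ≤ f a + ⟪g a, b - a⟫ + L / 2 * ‖b - a‖ ^ 2 := by
  set v := b - a with hv
  set h : ℝ → ℝ := fun t => f (a + t • v) - t * ⟪g a, v⟫ - L * t ^ 2 / 2 * ‖v‖ ^ 2 with hh
  have hd : ∀ t : ℝ, HasDerivAt h (⟪g (a + t • v), v⟫ - ⟪g a, v⟫ - L * t * ‖v‖ ^ 2) t := by
    intro t
    have h1 := hasDerivAt_comp_line f g hg a v t
    have h2 : HasDerivAt (fun t : ℝ => t * ⟪g a, v⟫) ⟪g a, v⟫ t := by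
      simpa using (hasDerivAt_id t).mul_const ⟪g a, v⟫
    have h3 : HasDerivAt (fun t : ℝ => L * t ^ 2 / 2 * ‖v‖ ^ 2) (L * t * ‖v‖ ^ 2) t := by
      have hp : HasDerivAt (fun t : ℝ => t ^ 2) (2 * t) t := by
        simpa using hasDerivAt_pow 2 t
      have := ((hp.const_mul L).div_const 2).mul_const (‖v‖ ^ 2)
      refine this.congr_deriv ?_
      ring
    exact (h1.sub h2).sub h3
  have hmono : AntitoneOn h (Set.Icc 0 1) := by
    apply antitoneOn_of_deriv_nonpos (convex_Icc 0 1)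
    · exact fun t _ => (hd t).continuousAt.continuousWithinAt
    · exact fun t ht => (hd t).differentiableAt.differentiableWithinAt
    · intro t ht
      rw [interior_Icc] at ht
      rw [(hd t).deriv]
      have hnb : ‖g (a + t • v) - g a‖ ≤ L * (t * ‖v‖) := by
        have h' := hlip.dist_le_mul (a + t • v) a
        rw [Real.coe_toNNReal L hL.le] at h'
        have : dist (a + t • v) a = t * ‖v‖ := by
          rw [dist_eq_norm]
          simp [norm_smul, abs_of_pos ht.1]
        rw [dist_eq_norm, this] at h'
        exact h'
      have hb : ⟪g (a + t • v) - g a, v⟫ ≤ L * t * ‖v‖ ^ 2 := by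
        calc ⟪g (a + t • v) - g a, v⟫ ≤ ‖g (a + t • v) - g a‖ * ‖v‖ :=
              real_inner_le_norm _ _
          _ ≤ (L * (t * ‖v‖)) * ‖v‖ := by
              apply mul_le_mul_of_nonneg_right hnb (norm_nonneg _)
          _ = L * t * ‖v‖ ^ 2 := by ring
      have hsub : ⟪g (a + t • v), v⟫ - ⟪g a, v⟫ = ⟪g (a + t • v) - g a, v⟫ :=
        (inner_sub_left _ _ _).symm
      linarith
  have h01 := hmono (Set.left_mem_Icc.2 zero_le_one) (Set.right_mem_Icc.2 zero_le_one)
    zero_le_one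
  have e0 : h 0 = f a := by simp [hh]
  have e1 : h 1 = f b - ⟪g a, v⟫ - L / 2 * ‖v‖ ^ 2 := by
    have hab : a + v = b := by rw [hv]; abel
    simp [hh, hab]
  rw [e0, e1] at h01
  linarith

private lemma cocoercivity (f : E → ℝ) (g : E → E)
    (hg : ∀ x, HasGradientAt f (g x) x) (hconv : ConvexOn ℝ Set.univ f)
    (L : ℝ) (hL : 0 < L) (hlip : LipschitzWith L.toNNReal g) (x y : E) :
    ‖g x - g y‖ ^ 2 ≤ 2 * L * (f x - f y - ⟪g y, x - y⟫) := by
  set u := g x - g y with hu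
  set z := x - L⁻¹ • u with hz
  have hdes := descent_lemma f g hg L hL hlip x z
  have hfo := convex_first_order f g hg hconv y z
  have e1 : z - x = -(L⁻¹ • u) := by rw [hz]; abel
  have e2 : ⟪g x, z - x⟫ = -(L⁻¹ * ⟪g x, u⟫) := by
    rw [e1, inner_neg_right, real_inner_smul_right]
  have e3 : ‖z - x‖ ^ 2 = L⁻¹ ^ 2 * ‖u‖ ^ 2 := by
    rw [e1, norm_neg, norm_smul, mul_pow, Real.norm_eq_abs, sq_abs]
  have e4 : z - y = (x - y) - L⁻¹ • u := by rw [hz]; abel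
  have e5 : ⟪g y, z - y⟫ = ⟪g y, x - y⟫ - L⁻¹ * ⟪g y, u⟫ := by
    rw [e4, inner_sub_right, real_inner_smul_right]
  have e6 : ⟪g x, u⟫ - ⟪g y, u⟫ = ‖u‖ ^ 2 := by
    rw [← inner_sub_left, ← hu]
    exact real_inner_self_eq_norm_sq u
  have r1 : L⁻¹ * ⟪g x, u⟫ - L⁻¹ * ⟪g y, u⟫ = L⁻¹ * ‖u‖ ^ 2 := by
    rw [← mul_sub, e6]
  have r2 : L / 2 * (L⁻¹ ^ 2 * ‖u‖ ^ 2) = (1 / 2) * (L⁻¹ * ‖u‖ ^ 2) := by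
    field_simp
  rw [e2, e3] at hdes
  rw [e5] at hfo
  have step : (1 / 2) * (L⁻¹ * ‖u‖ ^ 2) ≤ f x - f y - ⟪g y, x - y⟫ := by linarith
  have hmul := mul_le_mul_of_nonneg_left step (by positivity : (0:ℝ) ≤ 2 * L)
  have lhs_eq : 2 * L * ((1 / 2) * (L⁻¹ * ‖u‖ ^ 2)) = ‖u‖ ^ 2 := by
    field_simp
  rw [lhs_eq] at hmul
  exact hmul

private lemma keyv {n : ℕ} (hn0 : (n : ℝ) ≠ 0) (C B q : Fin n → ℝ) (Dvv c gy gxt : ℝ)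
    (hq : ∀ i, q i = 0 ∨ q i = 1) (hz : ∀ i, q i = 0 → C i = 0 ∧ B i = 0)
    (hD : Dvv * ((1 / n : ℝ) * ∑ i, q i) = 1)
    (hgy : gy = (n : ℝ)⁻¹ * ∑ i, C i) (hgxt : gxt = (n : ℝ)⁻¹ * ∑ i, B i)
    (hc : c = Dvv * gxt) :
    ∑ i, (C i - B i + q i * c - gy) ^ 2
      = ∑ i, (C i - B i) ^ 2 + n * (2 * gy * c - gxt * c - gy ^ 2) := by
  have expand : ∀ i, (C i - B i + q i * c - gy) ^ 2
      = (C i - B i) ^ 2 + c ^ 2 * q i + gy ^ 2 + (2 * c) * C i - (2 * c) * B i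
        - (2 * gy) * C i + (2 * gy) * B i - (2 * c * gy) * q i := by
    intro i
    rcases hq i with h | h
    · obtain ⟨h1, h2⟩ := hz i h
      rw [h, h1, h2]; ring
    · rw [h]; ring
  rw [Finset.sum_congr rfl (fun i _ => expand i)]
  have hSC : (∑ i, C i) = n * gy := by rw [hgy]; field_simp
  have hSB : (∑ i, B i) = n * gxt := by rw [hgxt]; field_simp
  have hDq : Dvv * (∑ i, q i) = n := by
    have := hD
    field_simp at this
    linarith [this]
  have hSq : (∑ i, q i) * c = n * gxt := by
    rw [hc]; linear_combination gxt * hDq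
  simp only [Finset.sum_add_distrib, Finset.sum_sub_distrib, ← Finset.mul_sum,
    Finset.sum_const, Finset.card_univ, Fintype.card_fin, nsmul_eq_mul]
  linear_combination (c - 2 * gy) * hSq + (2 * c - 2 * gy) * hSC + (2 * gy - 2 * c) * hSB

end Aux

theorem sparse_svrg_variance_bound {n d : ℕ} (hn : 0 < n) (L : ℝ) (hL : 0 < L)
    (fi : Fin n → EuclideanSpace ℝ (Fin d) → ℝ)
    (gi : Fin n → EuclideanSpace ℝ (Fin d) → EuclideanSpace ℝ (Fin d))
    (hgrad : ∀ i x, HasGradientAt (fi i) (gi i x) x)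
    (hconv : ∀ i, ConvexOn ℝ Set.univ (fi i))
    (hlip : ∀ i, LipschitzWith L.toNNReal (gi i))
    (p : Fin n → Fin d → ℝ) (hp : ∀ i v, p i v = 0 ∨ p i v = 1)
    (hsupp : ∀ i x v, p i v = 0 → gi i x v = 0)
    (Dv : Fin d → ℝ) (hDv : ∀ v, Dv v * ((1 / n : ℝ) * ∑ i, p i v) = 1)
    (F : EuclideanSpace ℝ (Fin d) → ℝ) (hF : ∀ x, F x = (1 / n : ℝ) * ∑ i, fi i x)
    (gF : EuclideanSpace ℝ (Fin d) → EuclideanSpace ℝ (Fin d))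
    (hgF : ∀ x, gF x = (n : ℝ)⁻¹ • ∑ i, gi i x)
    (y xt : EuclideanSpace ℝ (Fin d))
    (Dg : EuclideanSpace ℝ (Fin d)) (hDg : ∀ v, Dg v = Dv v * gF xt v)
    (Di : Fin n → EuclideanSpace ℝ (Fin d))
    (hDi : ∀ i v, Di i v = p i v * (Dv v * gF xt v))
    (G : Fin n → EuclideanSpace ℝ (Fin d))
    (hG : ∀ i, G i = gi i y - gi i xt + Di i) :
    (1 / n : ℝ) * ∑ i, ‖G i - gF y‖ ^ 2 ≤
      2 * L * (F xt - F y - ⟪gF y, xt - y⟫) - ‖gF y‖ ^ 2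
        + 2 * ⟪gF y, Dg⟫ - ⟪gF xt, Dg⟫ := by
  have hn0 : (n : ℝ) ≠ 0 := Nat.cast_ne_zero.2 hn.ne'
  -- coordinate tools
  have happ : ∀ (w : Fin n → EuclideanSpace ℝ (Fin d)) (v : Fin d),
      (∑ i, w i) v = ∑ i, w i v := fun w v =>
    map_sum (EuclideanSpace.proj v : EuclideanSpace ℝ (Fin d) →L[ℝ] ℝ) w Finset.univ
  have hinner : ∀ u w : EuclideanSpace ℝ (Fin d), ⟪u, w⟫ = ∑ v, u v * w v := by
    intro u w
    simp [PiLp.inner_apply, RCLike.inner_apply, mul_comm]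
  have hnorm : ∀ w : EuclideanSpace ℝ (Fin d), ‖w‖ ^ 2 = ∑ v, (w v) ^ 2 := by
    intro w
    rw [← real_inner_self_eq_norm_sq, PiLp.inner_apply]
    simp [RCLike.inner_apply, sq]
  have hgFv : ∀ (x : EuclideanSpace ℝ (Fin d)) (v : Fin d),
      gF x v = (n : ℝ)⁻¹ * ∑ i, gi i x v := by
    intro x v
    rw [hgF]
    rw [PiLp.smul_apply, happ]
    simp
  -- key identity
  have key : (1 / n : ℝ) * ∑ i, ‖G i - gF y‖ ^ 2
      = (1 / n : ℝ) * ∑ i, ‖gi i y - gi i xt‖ ^ 2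
        + 2 * ⟪gF y, Dg⟫ - ⟪gF xt, Dg⟫ - ‖gF y‖ ^ 2 := by
    have h1 : ∑ i, ‖G i - gF y‖ ^ 2
        = ∑ v, ∑ i, (gi i y v - gi i xt v + p i v * (Dv v * gF xt v) - gF y v) ^ 2 := by
      rw [Finset.sum_comm]
      refine Finset.sum_congr rfl fun i _ => ?_
      rw [hnorm]
      refine Finset.sum_congr rfl fun v _ => ?_
      congr 1
      rw [hG i]
      simp [hDi i v]
    have h2 : ∀ v, ∑ i, (gi i y v - gi i xt v + p i v * (Dv v * gF xt v) - gF y v) ^ 2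
        = ∑ i, (gi i y v - gi i xt v) ^ 2
          + n * (2 * gF y v * Dg v - gF xt v * Dg v - (gF y v) ^ 2) := by
      intro v
      have := keyv hn0 (fun i => gi i y v) (fun i => gi i xt v) (fun i => p i v)
        (Dv v) (Dg v) (gF y v) (gF xt v) (fun i => hp i v)
        (fun i hi => ⟨hsupp i y v hi, hsupp i xt v hi⟩) (hDv v)
        (hgFv y v) (hgFv xt v) (hDg v)
      rw [hDg v] at this ⊢
      exact this
    have h3 : ∑ i, ‖gi i y - gi i xt‖ ^ 2
        = ∑ v, ∑ i, (gi i y v - gi i xt v) ^ 2 := by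
      rw [Finset.sum_comm]
      refine Finset.sum_congr rfl fun i _ => ?_
      rw [hnorm]
      exact Finset.sum_congr rfl fun v _ => by simp
    rw [h1, Finset.sum_congr rfl fun v _ => h2 v, Finset.sum_add_distrib, ← Finset.mul_sum,
      ← h3]
    have h4 : ∑ v, (2 * gF y v * Dg v - gF xt v * Dg v - (gF y v) ^ 2)
        = 2 * ⟪gF y, Dg⟫ - ⟪gF xt, Dg⟫ - ‖gF y‖ ^ 2 := by
      rw [hinner (gF y) Dg, hinner (gF xt) Dg, hnorm (gF y), Finset.mul_sum,
        ← Finset.sum_sub_distrib, ← Finset.sum_sub_distrib]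
      exact Finset.sum_congr rfl fun v _ => by ring
    rw [mul_add, ← mul_assoc]
    rw [h4]
    have : (1 / n : ℝ) * n = 1 := by field_simp
    rw [this, one_mul]
    ring
  rw [key]
  -- smoothness bound
  have co : ∀ i, ‖gi i y - gi i xt‖ ^ 2
      ≤ 2 * L * (fi i xt - fi i y - ⟪gi i y, xt - y⟫) := by
    intro i
    have := cocoercivity (fi i) (gi i) (hgrad i) (hconv i) L hL (hlip i) xt y
    rwa [norm_sub_rev] at this
  have hsum : (1 / n : ℝ) * ∑ i, ‖gi i y - gi i xt‖ ^ 2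
      ≤ 2 * L * (F xt - F y - ⟪gF y, xt - y⟫) := by
    have hle : ∑ i, ‖gi i y - gi i xt‖ ^ 2
        ≤ ∑ i, 2 * L * (fi i xt - fi i y - ⟪gi i y, xt - y⟫) :=
      Finset.sum_le_sum fun i _ => co i
    have hpos : (0 : ℝ) ≤ (1 / n : ℝ) := by positivity
    have := mul_le_mul_of_nonneg_left hle hpos
    refine this.trans_eq ?_
    have hI : ⟪gF y, xt - y⟫ = (n : ℝ)⁻¹ * ∑ i, ⟪gi i y, xt - y⟫ := by
      rw [hgF, real_inner_smul_left, sum_inner]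
    have hninv : (n : ℝ)⁻¹ = (1 / n : ℝ) := by norm_num
    rw [hF, hF, hI, hninv]
    simp only [Finset.mul_sum, mul_sub, ← Finset.sum_sub_distrib]
    exact Finset.sum_congr rfl fun i _ => by ring
  linarith
end

section
/- Let f = (1/n)∑_{i=1}^n f_i with each f_i convex, L-smooth, and ∇f_i(x) supported on T_i. Let D, D_i be the sparse estimator matrices, 0 < θ < 1, Δτ̃ ≥ 0 a real constant, η = (1-θ)/(Lθ(1+Δτ̃)), φ = (1-θ)/L. Suppose for each k = 0,…,m-1, ŷ_k = θẑ_k + (1-θ)x̃ - φD∇f(x̃) and the averaged one-step bound ∑_{k=0}^{m-1}(f(ŷ_k) - f(x★)) ≤ ∑_{k=0}^{m-1}[ ((1-θ)/θ)⟨∇f(ŷ_k), x̃ - ŷ_k⟩ - (φ/θ)⟨∇f(ŷ_k), D∇f(x̃)⟩ + ((1-θ)/(2Lθ))·V_k ] + (Lθ(1+Δτ̃)/(2(1-θ)))(‖z_0 - x★‖² - ‖z_m - x★‖²) holds, where V_k = (1/n)∑_i ‖∇f_i(ŷ_k) - ∇f_i(x̃) + D_i∇f(x̃)‖². Then (1/m)∑_{k=0}^{m-1}(f(ŷ_k)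 - f(x★)) ≤ (1-θ)(f(x̃) - f(x★)) + (Lθ²(1+Δτ̃)/(2m(1-θ)))(‖z_0 - x★‖² - ‖z_m - x★‖²). -/
open scoped RealInnerProductSpace BigOperators

section helpers
variable {E : Type*} [NormedAddCommGroup E] [InnerProductSpace ℝ E] [CompleteSpace E]

lemma line_hasDerivAt' (f : E → ℝ) (g : E → E) (hg : ∀ x, HasGradientAt f (g x) x)
    (x v : E) (t : ℝ) :
    HasDerivAt (fun s : ℝ => f (x + s • v)) ⟪g (x + t • v), v⟫ t := by
  have h1 : HasDerivAt (fun s : ℝ => x + s • v) v t := by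
    simpa using ((hasDerivAt_id t).smul_const v).const_add x
  have h2 : HasFDerivAt f (InnerProductSpace.toDual ℝ E (g (x + t • v))) (x + t • v) :=
    hasGradientAt_iff_hasFDerivAt.mp (hg _)
  have h3 := h2.comp_hasDerivAt t h1
  simp at h3
  exact h3

lemma grad_convex_le' (f : E → ℝ) (g : E → E) (hg : ∀ x, HasGradientAt f (g x) x)
    (hc : ConvexOn ℝ Set.univ f) (x y : E) :
    f x + ⟪g x, y - x⟫ ≤ f y := by
  set φ : ℝ → ℝ := fun t => f (x + t • (y - x)) with hφdef
  have hconv : ConvexOn ℝ Set.univ φ := by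
    have h := hc.comp_affineMap (AffineMap.lineMap x y)
    have : φ = f ∘ (AffineMap.lineMap x y) := by
      funext t; simp [hφdef, AffineMap.lineMap_apply, add_comm]
    rw [this]
    simpa using h
  have hder : HasDerivAt φ ⟪g x, y - x⟫ 0 := by
    simpa using line_hasDerivAt' f g hg x (y - x) 0
  have hs := hconv.le_slope_of_hasDerivAt (x := 0) (y := 1) trivial trivial one_pos hder
  have hφ0 : φ 0 = f x := by simp [hφdef]
  have hφ1 : φ 1 = f y := by simp [hφdef]
  rw [slope_def_field, hφ0, hφ1] at hs
  simp at hs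
  linarith

lemma descent_le' (f : E → ℝ) (g : E → E) (hg : ∀ x, HasGradientAt f (g x) x)
    {L : ℝ} (hL : 0 < L) (hl : LipschitzWith L.toNNReal g) (x y : E) :
    f y ≤ f x + ⟪g x, y - x⟫ + L / 2 * ‖y - x‖ ^ 2 := by
  set v := y - x with hv
  set ψ : ℝ → ℝ := fun t => f (x + t • v) - t * ⟪g x, v⟫ - L / 2 * t ^ 2 * ‖v‖ ^ 2 with hψdef
  have hder : ∀ t : ℝ, HasDerivAt ψ (⟪g (x + t • v), v⟫ - ⟪g x, v⟫ - L * t * ‖v‖ ^ 2) t := by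
    intro t
    have h1 := line_hasDerivAt' f g hg x v t
    have h2 : HasDerivAt (fun s : ℝ => s * ⟪g x, v⟫) ⟪g x, v⟫ t := by
      simpa using (hasDerivAt_id t).mul_const (⟪g x, v⟫ : ℝ)
    have h3 : HasDerivAt (fun s : ℝ => L / 2 * s ^ 2 * ‖v‖ ^ 2) (L * t * ‖v‖ ^ 2) t := by
      have h4 := ((hasDerivAt_pow 2 t).const_mul (L / 2)).mul_const (‖v‖ ^ 2)
      convert h4 using 1
      · rfl
      · rfl
      · ring
    exact (h1.sub h2).sub h3
  have hmono : AntitoneOn ψ (Set.Icc 0 1) := by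
    apply antitoneOn_of_deriv_nonpos (convex_Icc 0 1)
    · exact fun t _ => ((hder t).differentiableAt).continuousAt.continuousWithinAt
    · exact fun t _ => ((hder t).differentiableAt).differentiableWithinAt
    · intro t ht
      rw [interior_Icc] at ht
      rw [(hder t).deriv]
      have hb : ⟪g (x + t • v) - g x, v⟫ ≤ L * t * ‖v‖ ^ 2 := by
        calc ⟪g (x + t • v) - g x, v⟫ ≤ ‖g (x + t • v) - g x‖ * ‖v‖ := real_inner_le_norm _ _
          _ ≤ (L * ‖t • v‖) * ‖v‖ := by
              apply mul_le_mul_of_nonneg_right _ (norm_nonneg _)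
              have hd := hl.dist_le_mul (x + t • v) x
              rw [dist_eq_norm, dist_eq_norm] at hd
              simpa [Real.coe_toNNReal L hL.le] using hd
          _ = L * (|t| * ‖v‖) * ‖v‖ := by rw [norm_smul]; simp
          _ ≤ L * t * ‖v‖ ^ 2 := le_of_eq (by rw [abs_of_pos ht.1]; ring)
      rw [inner_sub_left] at hb
      linarith
  have h01 : ψ 1 ≤ ψ 0 := hmono (Set.mem_Icc.mpr ⟨le_refl 0, zero_le_one⟩)
    (Set.mem_Icc.mpr ⟨zero_le_one, le_refl 1⟩) zero_le_one
  have hψ0 : ψ 0 = f x := by simp [hψdef]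
  have hψ1 : ψ 1 = f y - ⟪g x, v⟫ - L / 2 * ‖v‖ ^ 2 := by
    have hx1 : x + (1 : ℝ) • v = y := by rw [hv]; simp
    simp only [hψdef, hx1]; ring
  rw [hψ0, hψ1] at h01
  linarith

lemma cocoercive' (f : E → ℝ) (g : E → E) (hg : ∀ x, HasGradientAt f (g x) x)
    (hc : ConvexOn ℝ Set.univ f) {L : ℝ} (hL : 0 < L) (hl : LipschitzWith L.toNNReal g)
    (x y : E) :
    ‖g x - g y‖ ^ 2 ≤ 2 * L * (f x - f y - ⟪g y, x - y⟫) := by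
  set w := g x - g y with hw
  set z := x - L⁻¹ • w with hz
  have h1 := grad_convex_le' f g hg hc y z
  have h2 := descent_le' f g hg hL hl x z
  have ezx : z - x = -(L⁻¹ • w) := by rw [hz]; abel
  have ezy : z - y = (x - y) - L⁻¹ • w := by rw [hz]; abel
  have e1 : ⟪g x, z - x⟫ = -(L⁻¹ * ⟪g x, w⟫) := by
    rw [ezx, inner_neg_right, real_inner_smul_right]
  have e2 : ⟪g y, z - y⟫ = ⟪g y, x - y⟫ - L⁻¹ * ⟪g y, w⟫ := by
    rw [ezy, inner_sub_right, real_inner_smul_right]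
  have e3 : ‖z - x‖ ^ 2 = L⁻¹ ^ 2 * ‖w‖ ^ 2 := by
    rw [ezx, norm_neg, norm_smul]
    simp [abs_of_pos (inv_pos.mpr hL), mul_pow]
  have e4 : ⟪g x, w⟫ - ⟪g y, w⟫ = ‖w‖ ^ 2 := by
    rw [← inner_sub_left, ← hw, real_inner_self_eq_norm_sq]
  rw [e2] at h1
  rw [e1, e3] at h2
  have h5 : L / 2 * (L⁻¹ ^ 2 * ‖w‖ ^ 2) = 1 / 2 * (L⁻¹ * ‖w‖ ^ 2) := by
    field_simp
  have e5 : L⁻¹ * ⟪g x, w⟫ - L⁻¹ * ⟪g y, w⟫ = L⁻¹ * ‖w‖ ^ 2 := by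
    rw [← mul_sub, e4]
  have key : 1 / 2 * (L⁻¹ * ‖w‖ ^ 2) ≤ f x - f y - ⟪g y, x - y⟫ := by linarith
  calc ‖w‖ ^ 2 = 2 * L * (1 / 2 * (L⁻¹ * ‖w‖ ^ 2)) := by field_simp
    _ ≤ 2 * L * (f x - f y - ⟪g y, x - y⟫) :=
        mul_le_mul_of_nonneg_left key (by positivity)

end helpers

theorem epoch_level_inequality {n d : ℕ} (hn : 0 < n) (L : ℝ) (hL : 0 < L)
    (fi : Fin n → EuclideanSpace ℝ (Fin d) → ℝ)
    (gi : Fin n → EuclideanSpace ℝ (Fin d) → EuclideanSpace ℝ (Fin d))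
    (hgrad : ∀ i x, HasGradientAt (fi i) (gi i x) x)
    (hconv : ∀ i, ConvexOn ℝ Set.univ (fi i))
    (hlip : ∀ i, LipschitzWith L.toNNReal (gi i))
    (p : Fin n → Fin d → ℝ) (hp : ∀ i v, p i v = 0 ∨ p i v = 1)
    (hsupp : ∀ i x v, p i v = 0 → gi i x v = 0)
    (Dv : Fin d → ℝ) (hDv : ∀ v, Dv v * ((1 / n : ℝ) * ∑ i, p i v) = 1)
    (F : EuclideanSpace ℝ (Fin d) → ℝ) (hF : ∀ x, F x = (1 / n : ℝ) * ∑ i, fi i x)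
    (gF : EuclideanSpace ℝ (Fin d) → EuclideanSpace ℝ (Fin d))
    (hgF : ∀ x, gF x = (n : ℝ)⁻¹ • ∑ i, gi i x)
    (m : ℕ) (hm : 0 < m)
    (θ Δτ η φ : ℝ) (hθ0 : 0 < θ) (hθ1 : θ < 1) (hΔτ : 0 ≤ Δτ)
    (hη : η = (1 - θ) / (L * θ * (1 + Δτ))) (hφ : φ = (1 - θ) / L)
    (xt xstar z0 zm : EuclideanSpace ℝ (Fin d))
    (Dg : EuclideanSpace ℝ (Fin d)) (hDg : ∀ v, Dg v = Dv v * gF xt v)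
    (Di : Fin n → EuclideanSpace ℝ (Fin d))
    (hDi : ∀ i v, Di i v = p i v * (Dv v * gF xt v))
    (yh zh : ℕ → EuclideanSpace ℝ (Fin d))
    (hyh : ∀ k < m, yh k = θ • zh k + (1 - θ) • xt - φ • Dg)
    (V : ℕ → ℝ)
    (hV : ∀ k, V k = (1 / n : ℝ) * ∑ i, ‖gi i (yh k) - gi i xt + Di i‖ ^ 2)
    (hbound :
      ∑ k ∈ Finset.range m, (F (yh k) - F xstar) ≤
        (∑ k ∈ Finset.range m,
            (((1 - θ) / θ) * ⟪gF (yh k), xt - yh k⟫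
              - (φ / θ) * ⟪gF (yh k), Dg⟫
              + ((1 - θ) / (2 * L * θ)) * V k))
          + (L * θ * (1 + Δτ) / (2 * (1 - θ)))
              * (‖z0 - xstar‖ ^ 2 - ‖zm - xstar‖ ^ 2)) :
    (1 / m : ℝ) * ∑ k ∈ Finset.range m, (F (yh k) - F xstar) ≤
      (1 - θ) * (F xt - F xstar)
        + (L * θ ^ 2 * (1 + Δτ) / (2 * m * (1 - θ)))
            * (‖z0 - xstar‖ ^ 2 - ‖zm - xstar‖ ^ 2) := by
  have hθne : θ ≠ 0 := hθ0.ne'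
  have hLne : L ≠ 0 := hL.ne'
  have h1θ : 0 < 1 - θ := by linarith
  have h1θne : (1 - θ) ≠ 0 := h1θ.ne'
  have hm' : (m : ℝ) ≠ 0 := Nat.cast_ne_zero.mpr hm.ne'
  have hinner : ∀ a b : EuclideanSpace ℝ (Fin d), ⟪a, b⟫ = ∑ v, a v * b v := by
    intro a b
    simp [PiLp.inner_apply, RCLike.inner_apply]
    exact Finset.sum_congr rfl fun _ _ => mul_comm _ _
  have hnormsq : ∀ a : EuclideanSpace ℝ (Fin d), ‖a‖ ^ 2 = ∑ v, a v ^ 2 := by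
    intro a
    rw [← real_inner_self_eq_norm_sq, hinner]
    exact Finset.sum_congr rfl fun v _ => (sq _).symm
  have hDvpos : ∀ v, 0 ≤ Dv v := by
    intro v
    have havg : 0 ≤ (1 / n : ℝ) * ∑ i, p i v := by
      apply mul_nonneg (by positivity)
      apply Finset.sum_nonneg
      intro i _
      rcases hp i v with h | h <;> simp [h]
    nlinarith [hDv v]
  have hgFv : ∀ x v, gF x v = (n : ℝ)⁻¹ * ∑ i, gi i x v := by
    intro x v
    rw [hgF]
    rw [PiLp.smul_apply, smul_eq_mul]
    congr 1
    rw [WithLp.ofLp_sum]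
    exact Finset.sum_apply v Finset.univ _
  have hinggF : ∀ x w, ⟪gF x, w⟫ = (1 / n : ℝ) * ∑ i, ⟪gi i x, w⟫ := by
    intro x w
    rw [hgF x, real_inner_smul_left, sum_inner, one_div]
  -- variance bound
  have Vle : ∀ k, V k ≤ 2 * L * (F xt - F (yh k) - ⟪gF (yh k), xt - yh k⟫)
      + 2 * ⟪gF (yh k), Dg⟫ := by
    intro k
    set y := yh k with hy
    have hexp : V k = (1 / n : ℝ) * ∑ i, ‖gi i y - gi i xt‖ ^ 2
        + 2 * ((1 / n : ℝ) * ∑ i, ⟪gi i y - gi i xt, Di i⟫)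
        + (1 / n : ℝ) * ∑ i, ‖Di i‖ ^ 2 := by
      rw [hV]
      have hterm : ∀ i ∈ Finset.univ, ‖gi i y - gi i xt + Di i‖ ^ 2
          = ‖gi i y - gi i xt‖ ^ 2 + 2 * ⟪gi i y - gi i xt, Di i⟫ + ‖Di i‖ ^ 2 :=
        fun i _ => norm_add_sq_real _ _
      rw [Finset.sum_congr rfl hterm, Finset.sum_add_distrib, Finset.sum_add_distrib,
        ← Finset.mul_sum]
      ring
    have hcross : (1 / n : ℝ) * ∑ i, ⟪gi i y - gi i xt, Di i⟫
        = ⟪gF y, Dg⟫ - ⟪gF xt, Dg⟫ := by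
      have hterm : ∀ i, ⟪gi i y - gi i xt, Di i⟫
          = ∑ v, (gi i y v - gi i xt v) * (Dv v * gF xt v) := by
        intro i
        rw [hinner]
        refine Finset.sum_congr rfl fun v _ => ?_
        rw [hDi i v]
        have happ : (gi i y - gi i xt) v = gi i y v - gi i xt v := rfl
        rw [happ]
        rcases hp i v with h | h
        · simp [hsupp i y v h, hsupp i xt v h]
        · rw [h]; ring
      calc (1 / n : ℝ) * ∑ i, ⟪gi i y - gi i xt, Di i⟫
          = (1 / n : ℝ) * ∑ i, ∑ v, (gi i y v - gi i xt v) * (Dv v * gF xt v) := by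
            rw [Finset.sum_congr rfl fun i _ => hterm i]
        _ = ∑ v, ((1 / n : ℝ) * ∑ i, (gi i y v - gi i xt v)) * (Dv v * gF xt v) := by
            rw [Finset.sum_comm, Finset.mul_sum]
            refine Finset.sum_congr rfl fun v _ => ?_
            rw [← Finset.sum_mul, ← mul_assoc]
        _ = ∑ v, (gF y v - gF xt v) * (Dv v * gF xt v) := by
            refine Finset.sum_congr rfl fun v _ => ?_
            congr 1
            rw [Finset.sum_sub_distrib, mul_sub, hgFv y v, hgFv xt v, one_div]
        _ = ⟪gF y, Dg⟫ - ⟪gF xt, Dg⟫ := by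
            rw [hinner, hinner, ← Finset.sum_sub_distrib]
            refine Finset.sum_congr rfl fun v _ => ?_
            rw [hDg v]; ring
    have hsq : (1 / n : ℝ) * ∑ i, ‖Di i‖ ^ 2 = ⟪gF xt, Dg⟫ := by
      have hterm : ∀ i, ‖Di i‖ ^ 2 = ∑ v, p i v * (Dv v * gF xt v) ^ 2 := by
        intro i
        rw [hnormsq]
        refine Finset.sum_congr rfl fun v _ => ?_
        rw [hDi i v]
        rcases hp i v with h | h <;> rw [h] <;> ring
      calc (1 / n : ℝ) * ∑ i, ‖Di i‖ ^ 2
          = (1 / n : ℝ) * ∑ i, ∑ v, p i v * (Dv v * gF xt v) ^ 2 := by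
            rw [Finset.sum_congr rfl fun i _ => hterm i]
        _ = ∑ v, ((1 / n : ℝ) * ∑ i, p i v) * (Dv v * gF xt v) ^ 2 := by
            rw [Finset.sum_comm, Finset.mul_sum]
            refine Finset.sum_congr rfl fun v _ => ?_
            rw [← Finset.sum_mul, ← mul_assoc]
        _ = ∑ v, Dv v * (gF xt v) ^ 2 := by
            refine Finset.sum_congr rfl fun v _ => ?_
            linear_combination (Dv v * (gF xt v) ^ 2) * hDv v
        _ = ⟪gF xt, Dg⟫ := by
            rw [hinner]
            refine Finset.sum_congr rfl fun v _ => ?_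
            rw [hDg v]; ring
    have hpos : 0 ≤ ⟪gF xt, Dg⟫ := by
      rw [hinner]
      apply Finset.sum_nonneg
      intro v _
      rw [hDg v]
      nlinarith [hDvpos v, sq_nonneg (gF xt v)]
    have hsmooth : (1 / n : ℝ) * ∑ i, ‖gi i y - gi i xt‖ ^ 2
        ≤ 2 * L * (F xt - F y - ⟪gF y, xt - y⟫) := by
      have hper : ∀ i, ‖gi i y - gi i xt‖ ^ 2
          ≤ 2 * L * (fi i xt - fi i y - ⟪gi i y, xt - y⟫) := by
        intro i
        rw [norm_sub_rev]
        exact cocoercive' (fi i) (gi i) (hgrad i) (hconv i) hL (hlip i) xt y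
      calc (1 / n : ℝ) * ∑ i, ‖gi i y - gi i xt‖ ^ 2
          ≤ (1 / n : ℝ) * ∑ i, 2 * L * (fi i xt - fi i y - ⟪gi i y, xt - y⟫) :=
            mul_le_mul_of_nonneg_left (Finset.sum_le_sum fun i _ => hper i) (by positivity)
        _ = 2 * L * (F xt - F y - ⟪gF y, xt - y⟫) := by
            rw [hF, hF, hinggF]
            rw [← Finset.mul_sum, Finset.sum_sub_distrib, Finset.sum_sub_distrib]
            ring
    rw [hexp, hcross, hsq]
    linarith [hsmooth, hpos]
  -- per-k bracket bound
  have hub : ∀ k ∈ Finset.range m,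
      ((1 - θ) / θ) * ⟪gF (yh k), xt - yh k⟫ - (φ / θ) * ⟪gF (yh k), Dg⟫
        + ((1 - θ) / (2 * L * θ)) * V k
      ≤ ((1 - θ) / θ) * (F xt - F (yh k)) := by
    intro k _
    have hc3 : (0 : ℝ) ≤ (1 - θ) / (2 * L * θ) := by positivity
    have h := mul_le_mul_of_nonneg_left (Vle k) hc3
    have e1 : (1 - θ) / (2 * L * θ)
          * (2 * L * (F xt - F (yh k) - ⟪gF (yh k), xt - yh k⟫) + 2 * ⟪gF (yh k), Dg⟫)
        = ((1 - θ) / θ) * (F xt - F (yh k)) - ((1 - θ) / θ) * ⟪gF (yh k), xt - yh k⟫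
          + (φ / θ) * ⟪gF (yh k), Dg⟫ := by
      rw [hφ]; field_simp
    rw [e1] at h
    linarith
  have h2 := Finset.sum_le_sum hub
  have h3 : ∑ k ∈ Finset.range m, ((1 - θ) / θ) * (F xt - F (yh k))
      = ((1 - θ) / θ) * ((m : ℝ) * (F xt - F xstar)
        - ∑ k ∈ Finset.range m, (F (yh k) - F xstar)) := by
    rw [← Finset.mul_sum]
    congr 1
    have hterm : ∀ k ∈ Finset.range m,
        F xt - F (yh k) = (F xt - F xstar) - (F (yh k) - F xstar) := fun _ _ => by ring
    rw [Finset.sum_congr rfl hterm, Finset.sum_sub_distrib, Finset.sum_const,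
      Finset.card_range, nsmul_eq_mul]
  set S := ∑ k ∈ Finset.range m, (F (yh k) - F xstar) with hSdef
  set T := F xt - F xstar with hTdef
  set B := ‖z0 - xstar‖ ^ 2 - ‖zm - xstar‖ ^ 2 with hBdef
  have hS : S ≤ ((1 - θ) / θ) * ((m : ℝ) * T - S) + (L * θ * (1 + Δτ) / (2 * (1 - θ))) * B := by
    rw [h3] at h2
    linarith [hbound, h2]
  have h4 : θ * (((1 - θ) / θ) * ((m : ℝ) * T - S) + (L * θ * (1 + Δτ) / (2 * (1 - θ))) * B)
      = (1 - θ) * ((m : ℝ) * T - S) + θ * ((L * θ * (1 + Δτ) / (2 * (1 - θ))) * B) := by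
    field_simp
  have h5 := mul_le_mul_of_nonneg_left hS hθ0.le
  rw [h4] at h5
  have h6 : S ≤ (1 - θ) * (m : ℝ) * T + θ * ((L * θ * (1 + Δτ) / (2 * (1 - θ))) * B) := by
    nlinarith [h5]
  have h7 : (1 / m : ℝ) * S
      ≤ (1 / m : ℝ) * ((1 - θ) * (m : ℝ) * T + θ * ((L * θ * (1 + Δτ) / (2 * (1 - θ))) * B)) :=
    mul_le_mul_of_nonneg_left h6 (by positivity)
  have h8 : (1 / m : ℝ) * ((1 - θ) * (m : ℝ) * T + θ * ((L * θ * (1 + Δτ) / (2 * (1 - θ))) * B))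
      = (1 - θ) * T + (L * θ ^ 2 * (1 + Δτ) / (2 * m * (1 - θ))) * B := by
    field_simp
  rw [h8] at h7
  exact h7
end
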